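/- Let B = k{x_1,...,x_n} be the differential polynomial algebra over a differential field k of characteristic 0, graded by total degree deg (where each variable x_i^θ with θ = δ_1^{i_1}...δ_m^{i_m} has degree 1 + i_1 + ... + i_m). For f ∈ B let f̄ denote its highest homogeneous component with respect to deg. If f_1,...,f_r ∈ B are such that f̄_1,...,f̄_r are differentially algebraically independent over k, then for every u in the differential subalgebra generated by f_1,...,f_r, the highest homogeneous part ū lies in the differential subalgebra generated by f̄_1,...,f̄_r. -/
import Mathlib


open MvPolynomial

/-- The free commutative monoid of derivative operators on `m` derivations. -/
abbrev DOp (m : ℕ) := Fin m →₀ ℕ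

/-- The differential polynomial algebra `k{x_1,…,x_n}` with `m` commuting derivations:
the polynomial algebra on the variables `x_i^θ`. -/
abbrev DiffPoly (k : Type) [CommRing k] (n m : ℕ) := MvPolynomial (Fin n × DOp m) k

/-- The `i`-th derivation `δ_i` of `k{x_1,…,x_n}`, with `δ_i (x_j^θ) = x_j^{θ δ_i}`. -/
noncomputable def der (k : Type) [CommRing k] (n m : ℕ) (i : Fin m) :
    Derivation k (DiffPoly k n m) (DiffPoly k n m) :=
  MvPolynomial.mkDerivation k fun p => X (p.1, p.2 + Finsupp.single i 1)

/-- Application of a derivative operator `θ = δ_1^{i_1} ⋯ δ_m^{i_m}`. -/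
noncomputable def applyOp {k : Type} [CommRing k] {n m : ℕ} (θ : DOp m)
    (f : DiffPoly k n m) : DiffPoly k n m :=
  Fin.foldr m (fun i g => (⇑(der k n m i))^[θ i] g) f

/-- The differential subalgebra generated by a set: the smallest subalgebra containing it
and closed under all the derivations. -/
noncomputable def diffAdjoin (k : Type) [CommRing k] {n m : ℕ} (S : Set (DiffPoly k n m)) :
    Subalgebra k (DiffPoly k n m) :=
  sInf {T | S ⊆ T ∧ ∀ i : Fin m, ∀ x ∈ T, der k n m i x ∈ T}

/-- The weight of the variable `x_j^θ`: `1 + |θ|`. -/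
def dwt (n m : ℕ) : Fin n × DOp m → ℕ := fun p => 1 + p.2.sum fun _ v => v

/-- The degree of a differential polynomial. -/
noncomputable def ddeg {k : Type} [CommRing k] {n m : ℕ} (f : DiffPoly k n m) : ℕ :=
  weightedTotalDegree (dwt n m) f

/-- The highest homogeneous part of a differential polynomial. -/
noncomputable def dtop {k : Type} [CommRing k] {n m : ℕ} (f : DiffPoly k n m) :
    DiffPoly k n m :=
  weightedHomogeneousComponent (dwt n m) (ddeg f) f

/-- The variable `x` of `k{x,y}`. -/
noncomputable def xx (k : Type) [CommRing k] (m : ℕ) : DiffPoly k 2 m := X (0, 0)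

/-- The variable `y` of `k{x,y}`. -/
noncomputable def yy (k : Type) [CommRing k] (m : ℕ) : DiffPoly k 2 m := X (1, 0)

/-- A differential automorphism: an algebra automorphism commuting with all derivations. -/
def IsDiffAut {k : Type} [CommRing k] {m : ℕ}
    (φ : DiffPoly k 2 m ≃ₐ[k] DiffPoly k 2 m) : Prop :=
  ∀ i x, φ (der k 2 m i x) = der k 2 m i (φ x)

/-- An elementary automorphism: of the form `(a x + f(y), y)` or `(x, b y + g(x))`. -/
def IsElementary {k : Type} [CommRing k] {m : ℕ}
    (φ : DiffPoly k 2 m ≃ₐ[k] DiffPoly k 2 m) : Prop :=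
  IsDiffAut φ ∧
    ((∃ a : k, a ≠ 0 ∧ ∃ f ∈ diffAdjoin k {yy k m},
        φ (xx k m) = C a * xx k m + f ∧ φ (yy k m) = yy k m) ∨
     (∃ b : k, b ≠ 0 ∧ ∃ g ∈ diffAdjoin k {xx k m},
        φ (yy k m) = C b * yy k m + g ∧ φ (xx k m) = xx k m))

/-- A tame automorphism: a composition of elementary automorphisms. -/
def IsTame {k : Type} [CommRing k] {m : ℕ}
    (φ : DiffPoly k 2 m ≃ₐ[k] DiffPoly k 2 m) : Prop :=
  φ ∈ Subgroup.closure {ψ | IsElementary ψ}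

/-- An affine automorphism `(a₁x + b₁y + c₁, a₂x + b₂y + c₂)`. -/
def IsAffine {k : Type} [CommRing k] {m : ℕ}
    (φ : DiffPoly k 2 m ≃ₐ[k] DiffPoly k 2 m) : Prop :=
  IsDiffAut φ ∧ ∃ a₁ b₁ c₁ a₂ b₂ c₂ : k, a₁ * b₂ ≠ a₂ * b₁ ∧
    φ (xx k m) = C a₁ * xx k m + C b₁ * yy k m + C c₁ ∧
    φ (yy k m) = C a₂ * xx k m + C b₂ * yy k m + C c₂

/-- A triangular automorphism `(a x + f(y), b y + c)`. -/
def IsTriangular {k : Type} [CommRing k] {m : ℕ}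
    (φ : DiffPoly k 2 m ≃ₐ[k] DiffPoly k 2 m) : Prop :=
  IsDiffAut φ ∧ ∃ a b c : k, a ≠ 0 ∧ b ≠ 0 ∧ ∃ f ∈ diffAdjoin k {yy k m},
    φ (xx k m) = C a * xx k m + f ∧ φ (yy k m) = C b * yy k m + C c

/-- Membership in `C = Af₂(A) ∩ Tr₂(A)`. -/
def InC {k : Type} [CommRing k] {m : ℕ}
    (φ : DiffPoly k 2 m ≃ₐ[k] DiffPoly k 2 m) : Prop :=
  IsAffine φ ∧ IsTriangular φ

/-- Membership in the set `A₀ = {id} ∪ {(y, x + a y) : a ∈ k}` of coset representatives. -/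
def InA0 {k : Type} [CommRing k] {m : ℕ}
    (φ : DiffPoly k 2 m ≃ₐ[k] DiffPoly k 2 m) : Prop :=
  IsDiffAut φ ∧ (φ = 1 ∨ ∃ a : k,
    φ (xx k m) = yy k m ∧ φ (yy k m) = xx k m + C a * yy k m)

/-- Membership in the set `B₀ = {(x + q(y), y)}`, all homogeneous components of `q` of
degree at least `2`, of coset representatives. -/
def InB0 {k : Type} [CommRing k] {m : ℕ}
    (φ : DiffPoly k 2 m ≃ₐ[k] DiffPoly k 2 m) : Prop :=
  IsDiffAut φ ∧ ∃ q ∈ diffAdjoin k {yy k m},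
    (∀ d : ℕ, d < 2 → weightedHomogeneousComponent (dwt 2 m) d q = 0) ∧
    φ (xx k m) = xx k m + q ∧ φ (yy k m) = yy k m

/-! ### Auxiliary lemmas -/

section FoldrLemmas

variable {B : Type*}

theorem foldr_comm_ext (h : B → B) :
    ∀ (N : ℕ) (F : Fin N → B → B), (∀ j x, h (F j x) = F j (h x)) → ∀ x,
      h (Fin.foldr N F x) = Fin.foldr N F (h x)
  | 0, F, _, x => by simp
  | (N + 1), F, hc, x => by
      rw [Fin.foldr_succ, Fin.foldr_succ, hc,
        foldr_comm_ext h N _ (fun j y => hc j.succ y)]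

theorem foldr_eq_self :
    ∀ (N : ℕ) (F : Fin N → B → B), (∀ j x, F j x = x) → ∀ x, Fin.foldr N F x = x
  | 0, F, _, x => by simp
  | (N + 1), F, hc, x => by
      rw [Fin.foldr_succ, hc, foldr_eq_self N _ (fun j y => hc j.succ y)]

theorem foldr_iter_add :
    ∀ (N : ℕ) (G : Fin N → B → B), (∀ a b, Function.Commute (G a) (G b)) →
      ∀ (θ η : Fin N → ℕ) (x),
      Fin.foldr N (fun j y => (G j)^[θ j + η j] y) x
        = Fin.foldr N (fun j y => (G j)^[θ j] y) (Fin.foldr N (fun j y => (G j)^[η j] y) x)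
  | 0, G, _, θ, η, x => by simp
  | (N + 1), G, hc, θ, η, x => by
      rw [Fin.foldr_succ, Fin.foldr_succ, Fin.foldr_succ]
      show (G 0)^[θ 0 + η 0] _
        = (G 0)^[θ 0] (Fin.foldr N (fun j y => (G j.succ)^[θ j.succ] y)
            ((G 0)^[η 0] (Fin.foldr N (fun j y => (G j.succ)^[η j.succ] y) x)))
      rw [Function.iterate_add_apply]
      rw [foldr_iter_add N (fun j => G j.succ) (fun a b => hc a.succ b.succ)
        (fun j => θ j.succ) (fun j => η j.succ) x]
      rw [foldr_comm_ext ((G 0)^[η 0]) N (fun j y => (G j.succ)^[θ j.succ] y)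
        (fun j y => (((hc 0 j.succ).iterate_right (θ j.succ)).iterate_left (η 0)) y)]

theorem foldr_iter_single :
    ∀ (N : ℕ) (G : Fin N → B → B) (i : Fin N) (x),
      Fin.foldr N (fun j y => (G j)^[if j = i then 1 else 0] y) x = G i x
  | 0, _, i, _ => i.elim0
  | (N + 1), G, i, x => by
      induction i using Fin.cases with
      | zero =>
          rw [Fin.foldr_succ]
          show (G 0)^[if (0 : Fin (N + 1)) = 0 then 1 else 0]
            (Fin.foldr N (fun j y => (G j.succ)^[if j.succ = 0 then 1 else 0] y) x) = G 0 x
          rw [if_pos rfl, Function.iterate_one,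
            foldr_eq_self N _ (fun j y => by
              rw [if_neg (Fin.succ_ne_zero j), Function.iterate_zero_apply])]
      | succ i' =>
          rw [Fin.foldr_succ]
          show (G 0)^[if (0 : Fin (N + 1)) = i'.succ then 1 else 0]
            (Fin.foldr N (fun j y => (G j.succ)^[if j.succ = i'.succ then 1 else 0] y) x)
              = G i'.succ x
          rw [if_neg (Fin.succ_ne_zero i').symm, Function.iterate_zero_apply]
          have : (fun (j : Fin N) (y : B) => (G j.succ)^[if j.succ = i'.succ then 1 else 0] y)
              = fun j y => (G j.succ)^[if j = i' then 1 else 0] y := by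
            funext j y
            rw [if_congr ⟨fun h => Fin.succ_injective _ h, fun h => by rw [h]⟩ rfl rfl]
          rw [this, foldr_iter_single N (fun j => G j.succ) i' x]

theorem foldr_sub [SubtractionMonoid B] :
    ∀ (N : ℕ) (F : Fin N → B → B), (∀ j x y, F j (x - y) = F j x - F j y) →
      ∀ x y, Fin.foldr N F (x - y) = Fin.foldr N F x - Fin.foldr N F y
  | 0, F, _, x, y => by simp
  | (N + 1), F, hs, x, y => by
      rw [Fin.foldr_succ, Fin.foldr_succ, Fin.foldr_succ,
        foldr_sub N _ (fun j a b => hs j.succ a b), hs]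

theorem foldr_mem (T : Set B) :
    ∀ (N : ℕ) (F : Fin N → B → B), (∀ j, ∀ y ∈ T, F j y ∈ T) → ∀ x ∈ T, Fin.foldr N F x ∈ T
  | 0, F, _, x, hx => by simpa using hx
  | (N + 1), F, hc, x, hx => by
      rw [Fin.foldr_succ]
      exact hc 0 _ (foldr_mem T N _ (fun j y hy => hc j.succ y hy) x hx)

theorem iterate_mem {T : Set B} {F : B → B} (hF : ∀ y ∈ T, F y ∈ T) :
    ∀ (t : ℕ), ∀ x ∈ T, F^[t] x ∈ T
  | 0, x, hx => by simpa using hx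
  | (t + 1), x, hx => by
      rw [Function.iterate_succ_apply']
      exact hF _ (iterate_mem hF t x hx)

theorem iterate_sub [SubtractionMonoid B] {F : B → B} (hF : ∀ x y, F (x - y) = F x - F y) :
    ∀ (t : ℕ), ∀ x y, F^[t] (x - y) = F^[t] x - F^[t] y
  | 0, x, y => by simp
  | (t + 1), x, y => by
      rw [Function.iterate_succ_apply', Function.iterate_succ_apply',
        Function.iterate_succ_apply', iterate_sub hF t, hF]

end FoldrLemmas

section DerLemmas

variable {k : Type} [CommRing k] {n m : ℕ}

theorem der_comm (i j : Fin m) (x : DiffPoly k n m) :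
    der k n m i (der k n m j x) = der k n m j (der k n m i x) := by
  have h : ⁅der k n m i, der k n m j⁆ = 0 := by
    apply MvPolynomial.derivation_ext
    intro p
    rw [Derivation.commutator_apply]
    show der k n m i (der k n m j (X p)) - der k n m j (der k n m i (X p))
      = (0 : Derivation k (DiffPoly k n m) (DiffPoly k n m)) (X p)
    unfold der
    rw [mkDerivation_X, mkDerivation_X, mkDerivation_X, mkDerivation_X]
    show (X (p.1, p.2 + Finsupp.single j 1 + Finsupp.single i 1) : DiffPoly k n m)
      - X (p.1, p.2 + Finsupp.single i 1 + Finsupp.single j 1) = 0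
    rw [add_right_comm, sub_self]
  have := DFunLike.congr_fun h x
  rw [Derivation.commutator_apply] at this
  simpa [sub_eq_zero] using this

theorem der_commute (i j : Fin m) :
    Function.Commute (⇑(der k n m i)) (⇑(der k n m j)) :=
  fun x => der_comm i j x

theorem applyOp_zero (f : DiffPoly k n m) : applyOp (0 : DOp m) f = f := by
  unfold applyOp
  exact foldr_eq_self m _ (fun j y => by
    rw [show ((0 : DOp m)) j = 0 from rfl, Function.iterate_zero_apply]) f

theorem applyOp_add_op (θ η : DOp m) (f : DiffPoly k n m) :
    applyOp (θ + η) f = applyOp θ (applyOp η f) := by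
  unfold applyOp
  have : (fun (i : Fin m) (g : DiffPoly k n m) => (⇑(der k n m i))^[(θ + η) i] g)
      = fun i g => (⇑(der k n m i))^[θ i + η i] g := by
    funext i g; rw [Finsupp.add_apply]
  rw [this]
  exact foldr_iter_add m _ (fun a b => der_commute a b) _ _ f

theorem applyOp_single (i : Fin m) (f : DiffPoly k n m) :
    applyOp (Finsupp.single i 1) f = der k n m i f := by
  unfold applyOp
  have : (fun (j : Fin m) (g : DiffPoly k n m) => (⇑(der k n m j))^[(Finsupp.single i 1) j] g)
      = fun j g => (⇑(der k n m j))^[if j = i then 1 else 0] g := by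
    funext j g
    rw [Finsupp.single_apply, if_congr eq_comm rfl rfl]
  rw [this]
  exact foldr_iter_single m _ i f

theorem applyOp_der (i : Fin m) (θ : DOp m) (f : DiffPoly k n m) :
    applyOp θ (der k n m i f) = der k n m i (applyOp θ f) := by
  unfold applyOp
  exact (foldr_comm_ext (⇑(der k n m i)) m _
    (fun j y => ((der_commute i j).iterate_right (θ j)) y) f).symm

theorem der_applyOp (i : Fin m) (θ : DOp m) (f : DiffPoly k n m) :
    der k n m i (applyOp θ f) = applyOp (θ + Finsupp.single i 1) f := by
  rw [applyOp_add_op, applyOp_single, applyOp_der]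

theorem applyOp_sub (θ : DOp m) (a b : DiffPoly k n m) :
    applyOp θ (a - b) = applyOp θ a - applyOp θ b := by
  unfold applyOp
  exact foldr_sub m _ (fun j x y => iterate_sub (fun x y => map_sub _ x y) (θ j) x y) a b

end DerLemmas

section DegLemmas

variable {k : Type} [CommRing k] {n m : ℕ}

open Finsupp

/-- Polynomials all of whose monomials have weight `≤ a`. -/
def degLE (k : Type) [CommRing k] (n m : ℕ) (a : ℕ) : Submodule k (DiffPoly k n m) where
  carrier := {x | ∀ μ, coeff μ x ≠ 0 → weight (dwt n m) μ ≤ a}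
  zero_mem' := by intro μ h; simp at h
  add_mem' := by
    intro x y hx hy μ h
    rw [coeff_add] at h
    by_cases hx0 : coeff μ x = 0
    · exact hy μ (by rwa [hx0, zero_add] at h)
    · exact hx μ hx0
  smul_mem' := by
    intro c x hx μ h
    rw [coeff_smul] at h
    exact hx μ (fun h0 => h (by rw [h0, smul_zero]))

/-- Polynomials all of whose monomials have weight `< b`. -/
def degLT (k : Type) [CommRing k] (n m : ℕ) (b : ℕ) : Submodule k (DiffPoly k n m) where
  carrier := {x | ∀ μ, coeff μ x ≠ 0 → weight (dwt n m) μ < b}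
  zero_mem' := by intro μ h; simp at h
  add_mem' := by
    intro x y hx hy μ h
    rw [coeff_add] at h
    by_cases hx0 : coeff μ x = 0
    · exact hy μ (by rwa [hx0, zero_add] at h)
    · exact hx μ hx0
  smul_mem' := by
    intro c x hx μ h
    rw [coeff_smul] at h
    exact hx μ (fun h0 => h (by rw [h0, smul_zero]))

theorem mem_degLE {a : ℕ} {x : DiffPoly k n m} :
    x ∈ degLE k n m a ↔ ∀ μ, coeff μ x ≠ 0 → weight (dwt n m) μ ≤ a := Iff.rfl

theorem mem_degLT {b : ℕ} {x : DiffPoly k n m} :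
    x ∈ degLT k n m b ↔ ∀ μ, coeff μ x ≠ 0 → weight (dwt n m) μ < b := Iff.rfl

theorem degLE_mono {a b : ℕ} (h : a ≤ b) : degLE k n m a ≤ degLE k n m b :=
  fun _ hx μ hc => (hx μ hc).trans h

theorem degLT_mono {a b : ℕ} (h : a ≤ b) : degLT k n m a ≤ degLT k n m b :=
  fun _ hx μ hc => lt_of_lt_of_le (hx μ hc) h

theorem degLT_le_degLE {a : ℕ} : degLT k n m a ≤ degLE k n m a :=
  fun _ hx μ hc => le_of_lt (hx μ hc)

theorem degLE_le_degLT {a b : ℕ} (h : a < b) : degLE k n m a ≤ degLT k n m b :=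
  fun _ hx μ hc => lt_of_le_of_lt (hx μ hc) h

theorem WHS_le_degLE {a : ℕ} :
    weightedHomogeneousSubmodule k (dwt n m) a ≤ degLE k n m a :=
  fun _ hx μ hc => le_of_eq (hx hc)

theorem mul_mem_degLE_degLE {a b : ℕ} {x y : DiffPoly k n m}
    (hx : x ∈ degLE k n m a) (hy : y ∈ degLE k n m b) : x * y ∈ degLE k n m (a + b) := by
  intro μ hc
  rw [MvPolynomial.coeff_mul] at hc
  obtain ⟨⟨μ1, μ2⟩, hmem, hne⟩ := Finset.exists_ne_zero_of_sum_ne_zero hc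
  have h12 : μ1 + μ2 = μ := Finset.HasAntidiagonal.mem_antidiagonal.mp hmem
  have h1 : coeff μ1 x ≠ 0 := fun h => hne (by rw [h, zero_mul])
  have h2 : coeff μ2 y ≠ 0 := fun h => hne (by rw [h, mul_zero])
  calc weight (dwt n m) μ = weight (dwt n m) μ1 + weight (dwt n m) μ2 := by
        rw [← h12, map_add]
    _ ≤ a + b := add_le_add (hx μ1 h1) (hy μ2 h2)

theorem mul_mem_degLE_degLT {a b : ℕ} {x y : DiffPoly k n m}
    (hx : x ∈ degLE k n m a) (hy : y ∈ degLT k n m b) : x * y ∈ degLT k n m (a + b) := by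
  intro μ hc
  rw [MvPolynomial.coeff_mul] at hc
  obtain ⟨⟨μ1, μ2⟩, hmem, hne⟩ := Finset.exists_ne_zero_of_sum_ne_zero hc
  have h12 : μ1 + μ2 = μ := Finset.HasAntidiagonal.mem_antidiagonal.mp hmem
  have h1 : coeff μ1 x ≠ 0 := fun h => hne (by rw [h, zero_mul])
  have h2 : coeff μ2 y ≠ 0 := fun h => hne (by rw [h, mul_zero])
  calc weight (dwt n m) μ = weight (dwt n m) μ1 + weight (dwt n m) μ2 := by
        rw [← h12, map_add]
    _ < a + b := Nat.add_lt_add_of_le_of_lt (hx μ1 h1) (hy μ2 h2)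

theorem mul_mem_degLT_degLE {a b : ℕ} {x y : DiffPoly k n m}
    (hx : x ∈ degLT k n m a) (hy : y ∈ degLE k n m b) : x * y ∈ degLT k n m (a + b) := by
  rw [mul_comm, Nat.add_comm]
  exact mul_mem_degLE_degLT hy hx

theorem one_mem_degLE : (1 : DiffPoly k n m) ∈ degLE k n m 0 := by
  intro μ hc
  rw [MvPolynomial.coeff_one] at hc
  by_cases h : (0 : (Fin n × DOp m) →₀ ℕ) = μ
  · rw [← h, map_zero]
  · rw [if_neg h] at hc; exact absurd rfl hc

theorem pow_mem_degLE {a : ℕ} {x : DiffPoly k n m} (hx : x ∈ degLE k n m a) :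
    ∀ (t : ℕ), x ^ t ∈ degLE k n m (t * a)
  | 0 => by rw [pow_zero, Nat.zero_mul]; exact one_mem_degLE
  | (t + 1) => by
      rw [pow_succ, Nat.succ_mul]
      exact mul_mem_degLE_degLE (pow_mem_degLE hx t) hx

theorem pow_sub_pow_mem_degLT {a : ℕ} {x y : DiffPoly k n m} (hx : x ∈ degLE k n m a)
    (hy : y ∈ degLE k n m a) (hd : x - y ∈ degLT k n m a) :
    ∀ (t : ℕ), x ^ t - y ^ t ∈ degLT k n m (t * a)
  | 0 => by rw [pow_zero, pow_zero, sub_self]; exact Submodule.zero_mem _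
  | (t + 1) => by
      have hident : x ^ (t + 1) - y ^ (t + 1) = x * (x ^ t - y ^ t) + (x - y) * y ^ t := by
        ring
      rw [hident, Nat.succ_mul, Nat.add_comm (t * a) a]
      exact Submodule.add_mem _
        (mul_mem_degLE_degLT hx (pow_sub_pow_mem_degLT hx hy hd t))
        (mul_mem_degLT_degLE hd (pow_mem_degLE hy t))

theorem prod_mem_degLE {ι : Type*} (s : Finset ι) (F : ι → DiffPoly k n m) (e dg : ι → ℕ)
    (hF : ∀ p ∈ s, F p ∈ degLE k n m (dg p)) :
    (∏ p ∈ s, F p ^ e p) ∈ degLE k n m (∑ p ∈ s, e p * dg p) := by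
  classical
  induction s using Finset.induction_on with
  | empty => rw [Finset.prod_empty, Finset.sum_empty]; exact one_mem_degLE
  | @insert p s' hx ih =>
      rw [Finset.prod_insert hx, Finset.sum_insert hx]
      exact mul_mem_degLE_degLE (pow_mem_degLE (hF p (Finset.mem_insert_self p s')) (e p))
        (ih (fun q hq => hF q (Finset.mem_insert_of_mem hq)))

theorem prod_sub_prod_mem_degLT {ι : Type*} (s : Finset ι) (Bf Af : ι → DiffPoly k n m)
    (e dg : ι → ℕ) (hA : ∀ p ∈ s, Af p ∈ degLE k n m (dg p))
    (hB : ∀ p ∈ s, Bf p ∈ degLE k n m (dg p))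
    (hD : ∀ p ∈ s, Bf p - Af p ∈ degLT k n m (dg p)) :
    (∏ p ∈ s, Bf p ^ e p) - (∏ p ∈ s, Af p ^ e p)
      ∈ degLT k n m (∑ p ∈ s, e p * dg p) := by
  classical
  induction s using Finset.induction_on with
  | empty => rw [Finset.prod_empty, Finset.prod_empty, sub_self]; exact Submodule.zero_mem _
  | @insert p s' hx ih =>
      rw [Finset.prod_insert hx, Finset.prod_insert hx, Finset.sum_insert hx]
      have hident : Bf p ^ e p * (∏ q ∈ s', Bf q ^ e q)
          - Af p ^ e p * (∏ q ∈ s', Af q ^ e q)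
          = Bf p ^ e p * ((∏ q ∈ s', Bf q ^ e q) - (∏ q ∈ s', Af q ^ e q))
            + (Bf p ^ e p - Af p ^ e p) * (∏ q ∈ s', Af q ^ e q) := by ring
      rw [hident]
      refine Submodule.add_mem _ ?_ ?_
      · exact mul_mem_degLE_degLT
          (pow_mem_degLE (hB p (Finset.mem_insert_self p s')) (e p))
          (ih (fun q hq => hA q (Finset.mem_insert_of_mem hq))
            (fun q hq => hB q (Finset.mem_insert_of_mem hq))
            (fun q hq => hD q (Finset.mem_insert_of_mem hq)))
      · exact mul_mem_degLT_degLE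
          (pow_sub_pow_mem_degLT (hB p (Finset.mem_insert_self p s'))
            (hA p (Finset.mem_insert_self p s')) (hD p (Finset.mem_insert_self p s')) (e p))
          (prod_mem_degLE s' Af e dg (fun q hq => hA q (Finset.mem_insert_of_mem hq)))

end DegLemmas

section HomogDer

variable {k : Type} [CommRing k] {n m : ℕ}

open Finsupp

theorem weight_single_eq (p : Fin n × DOp m) :
    weight (dwt n m) (Finsupp.single p 1) = dwt n m p := by
  rw [weight_apply, Finsupp.sum_single_index (by rw [zero_smul]), one_smul]

theorem dwt_add_single (p : Fin n × DOp m) (i : Fin m) :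
    dwt n m (p.1, p.2 + Finsupp.single i 1) = dwt n m p + 1 := by
  unfold dwt
  have : (p.2 + Finsupp.single i 1).sum (fun _ v => v)
      = p.2.sum (fun _ v => v) + 1 := by
    rw [Finsupp.sum_add_index' (fun _ => rfl) (fun _ _ _ => rfl),
      Finsupp.sum_single_index rfl]
  rw [this]
  omega

theorem der_monomial_mem (i : Fin m) (μ : (Fin n × DOp m) →₀ ℕ) (c : k) :
    der k n m i (monomial μ c)
      ∈ weightedHomogeneousSubmodule k (dwt n m) (weight (dwt n m) μ + 1) := by
  unfold der
  rw [mkDerivation_monomial]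
  apply Submodule.smul_mem
  rw [Finsupp.sum]
  apply Submodule.sum_mem
  intro p hp
  have hle : Finsupp.single p 1 ≤ μ := by
    rw [Finsupp.single_le_iff]
    exact Nat.one_le_iff_ne_zero.mpr (Finsupp.mem_support_iff.mp hp)
  have hcancel : μ - Finsupp.single p 1 + Finsupp.single p 1 = μ :=
    tsub_add_cancel_of_le hle
  have hwt : weight (dwt n m) (μ - Finsupp.single p 1) + dwt n m p = weight (dwt n m) μ := by
    rw [← weight_single_eq p, ← map_add, hcancel]
  have h1 : IsWeightedHomogeneous (dwt n m)
      (monomial (μ - Finsupp.single p 1) ((μ p : k)))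
      (weight (dwt n m) (μ - Finsupp.single p 1)) :=
    isWeightedHomogeneous_monomial _ _ _ rfl
  have h2 : IsWeightedHomogeneous (dwt n m)
      (X (p.1, p.2 + Finsupp.single i 1) : DiffPoly k n m)
      (dwt n m (p.1, p.2 + Finsupp.single i 1)) := isWeightedHomogeneous_X _ _ _
  have h3 := h1.mul h2
  rw [mem_weightedHomogeneousSubmodule, smul_eq_mul]
  have harr : weight (dwt n m) (μ - Finsupp.single p 1)
      + dwt n m (p.1, p.2 + Finsupp.single i 1) = weight (dwt n m) μ + 1 := by
    rw [dwt_add_single]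
    omega
  rwa [harr] at h3

theorem der_decomp (i : Fin m) (h : DiffPoly k n m) :
    der k n m i h = ∑ μ ∈ h.support, der k n m i (monomial μ (coeff μ h)) := by
  rw [← map_sum, ← as_sum]

theorem der_mem_WHS {a : ℕ} {h : DiffPoly k n m}
    (hh : h ∈ weightedHomogeneousSubmodule k (dwt n m) a) (i : Fin m) :
    der k n m i h ∈ weightedHomogeneousSubmodule k (dwt n m) (a + 1) := by
  rw [der_decomp]
  apply Submodule.sum_mem
  intro μ hμ
  have := der_monomial_mem i μ (coeff μ h)
  rwa [hh (MvPolynomial.mem_support_iff.mp hμ)] at this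

theorem der_mem_degLE {a : ℕ} {h : DiffPoly k n m} (hh : h ∈ degLE k n m a) (i : Fin m) :
    der k n m i h ∈ degLE k n m (a + 1) := by
  rw [der_decomp]
  apply Submodule.sum_mem
  intro μ hμ
  exact degLE_mono (Nat.add_le_add_right (hh μ (MvPolynomial.mem_support_iff.mp hμ)) 1)
    (WHS_le_degLE (der_monomial_mem i μ (coeff μ h)))

theorem der_mem_degLT {a : ℕ} {h : DiffPoly k n m} (hh : h ∈ degLT k n m a) (i : Fin m) :
    der k n m i h ∈ degLT k n m (a + 1) := by
  rw [der_decomp]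
  apply Submodule.sum_mem
  intro μ hμ
  exact degLE_le_degLT (Nat.add_lt_add_right (hh μ (MvPolynomial.mem_support_iff.mp hμ)) 1)
    (WHS_le_degLE (der_monomial_mem i μ (coeff μ h)))

theorem applyOp_mem_shift (M : ℕ → Submodule k (DiffPoly k n m))
    (hder : ∀ (i : Fin m) (a : ℕ), ∀ x ∈ M a, der k n m i x ∈ M (a + 1)) :
    ∀ (N : ℕ) (θ : DOp m), (θ.sum fun _ v => v) = N →
      ∀ (a : ℕ), ∀ x ∈ M a, applyOp θ x ∈ M (a + N)
  | 0, θ, hθ, a, x, hx => by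
      have hθ0 : θ = 0 := by
        ext j
        by_cases hj : j ∈ θ.support
        · rw [Finsupp.sum] at hθ
          have := (Finset.sum_eq_zero_iff.mp hθ) j hj
          simpa using this
        · simpa using Finsupp.notMem_support_iff.mp hj
      rw [hθ0, applyOp_zero]
      simpa using hx
  | (N + 1), θ, hθ, a, x, hx => by
      have hθne : θ ≠ 0 := by
        intro h0
        rw [h0] at hθ
        simp [Finsupp.sum] at hθ
      obtain ⟨j, hj⟩ := Finsupp.support_nonempty_iff.mpr hθne
      have hle : Finsupp.single j 1 ≤ θ := by
        rw [Finsupp.single_le_iff]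
        exact Nat.one_le_iff_ne_zero.mpr (Finsupp.mem_support_iff.mp hj)
      have hcancel : θ - Finsupp.single j 1 + Finsupp.single j 1 = θ :=
        tsub_add_cancel_of_le hle
      have hsum : ((θ - Finsupp.single j 1).sum fun _ v => v) = N := by
        have : ((θ - Finsupp.single j 1).sum fun _ v => v)
            + ((Finsupp.single j 1 : DOp m).sum fun _ v => v) = N + 1 := by
          rw [← Finsupp.sum_add_index' (fun _ => rfl) (fun _ _ _ => rfl), hcancel, hθ]
        rw [Finsupp.sum_single_index rfl] at this
        omega
      have step : applyOp θ x = applyOp (θ - Finsupp.single j 1) (der k n m j x) := by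
        rw [← applyOp_single j x, ← applyOp_add_op, hcancel]
      rw [step, show a + (N + 1) = (a + 1) + N by omega]
      exact applyOp_mem_shift M hder N _ hsum (a + 1) _ (hder j a x hx)

theorem applyOp_mem_shift' (M : ℕ → Submodule k (DiffPoly k n m))
    (hder : ∀ (i : Fin m) (a : ℕ), ∀ x ∈ M a, der k n m i x ∈ M (a + 1))
    (θ : DOp m) (a : ℕ) {x : DiffPoly k n m} (hx : x ∈ M a) :
    applyOp θ x ∈ M (a + θ.sum fun _ v => v) :=
  applyOp_mem_shift M hder _ θ rfl a x hx

theorem WHS_pow {a : ℕ} {x : DiffPoly k n m}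
    (hx : IsWeightedHomogeneous (dwt n m) x a) :
    ∀ (t : ℕ), IsWeightedHomogeneous (dwt n m) (x ^ t) (t * a)
  | 0 => by rw [pow_zero, Nat.zero_mul]; exact isWeightedHomogeneous_one _ _
  | (t + 1) => by
      rw [pow_succ, Nat.succ_mul]
      exact (WHS_pow hx t).mul hx

theorem sub_dtop_mem_degLT {h : DiffPoly k n m} :
    h - dtop h ∈ degLT k n m (ddeg h) := by
  intro μ hc
  classical
  unfold dtop at hc
  rw [MvPolynomial.coeff_sub, coeff_weightedHomogeneousComponent] at hc
  by_cases hw : weight (dwt n m) μ = ddeg h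
  · rw [if_pos hw, sub_self] at hc
    exact absurd rfl hc
  · have hne : coeff μ h ≠ 0 := by
      intro h0
      rw [if_neg hw, h0, sub_zero] at hc
      exact hc rfl
    have hle : weight (dwt n m) μ ≤ ddeg h :=
      le_weightedTotalDegree (dwt n m) (MvPolynomial.mem_support_iff.mpr hne)
    exact lt_of_le_of_ne hle hw

end HomogDer

section AdjoinLemmas

variable {k : Type} [CommRing k] {n m : ℕ}

theorem subset_diffAdjoin (S : Set (DiffPoly k n m)) : S ⊆ diffAdjoin k S := by
  intro x hx
  exact Algebra.mem_sInf.mpr fun T hT => hT.1 hx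

theorem der_mem_diffAdjoin {S : Set (DiffPoly k n m)} {x : DiffPoly k n m} (i : Fin m)
    (hx : x ∈ diffAdjoin k S) : der k n m i x ∈ diffAdjoin k S :=
  Algebra.mem_sInf.mpr fun T hT => hT.2 i x (Algebra.mem_sInf.mp hx T hT)

theorem applyOp_mem_diffAdjoin {S : Set (DiffPoly k n m)} {x : DiffPoly k n m} (θ : DOp m)
    (hx : x ∈ diffAdjoin k S) : applyOp θ x ∈ diffAdjoin k S := by
  unfold applyOp
  refine foldr_mem (diffAdjoin k S : Set (DiffPoly k n m)) m _ ?_ x hx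
  intro j y hy
  exact iterate_mem (fun z hz => der_mem_diffAdjoin j hz) (θ j) y hy

end AdjoinLemmas

section AevalLemmas

variable {k : Type} [CommRing k] {n m : ℕ}

open Finsupp

theorem aeval_monomial_mem_WHS {r : ℕ} (G : Fin r × DOp m → DiffPoly k n m)
    (w' : Fin r × DOp m → ℕ)
    (hG : ∀ p, IsWeightedHomogeneous (dwt n m) (G p) (w' p))
    (α : (Fin r × DOp m) →₀ ℕ) (c : k) :
    aeval G (monomial α c)
      ∈ weightedHomogeneousSubmodule k (dwt n m) (weight w' α) := by
  rw [aeval_monomial, mem_weightedHomogeneousSubmodule, MvPolynomial.algebraMap_eq]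
  have hprod : IsWeightedHomogeneous (dwt n m) (α.prod fun p t => G p ^ t)
      (∑ p ∈ α.support, α p * w' p) := by
    rw [Finsupp.prod]
    exact IsWeightedHomogeneous.prod α.support _ (fun p => α p * w' p)
      (fun p _ => WHS_pow (hG p) (α p))
  have hw : weight w' α = ∑ p ∈ α.support, α p * w' p := by
    rw [Finsupp.weight_apply, Finsupp.sum]
    exact Finset.sum_congr rfl (fun p _ => nsmul_eq_mul _ _)
  have h := (isWeightedHomogeneous_C (dwt n m) c).mul hprod
  rw [zero_add] at h
  rwa [hw]

theorem aeval_isWH {r : ℕ} (G : Fin r × DOp m → DiffPoly k n m)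
    (w' : Fin r × DOp m → ℕ)
    (hG : ∀ p, IsWeightedHomogeneous (dwt n m) (G p) (w' p))
    {Q : DiffPoly k r m} {d : ℕ} (hQ : IsWeightedHomogeneous w' Q d) :
    IsWeightedHomogeneous (dwt n m) (aeval G Q) d := by
  have hsum : aeval G Q = ∑ α ∈ Q.support, aeval G (monomial α (coeff α Q)) := by
    conv_lhs => rw [as_sum Q]
    rw [map_sum]
  rw [← mem_weightedHomogeneousSubmodule, hsum]
  apply Submodule.sum_mem
  intro α hα
  have h := aeval_monomial_mem_WHS G w' hG α (coeff α Q)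
  rwa [hQ (MvPolynomial.mem_support_iff.mp hα)] at h

theorem diffAdjoin_le_range {r : ℕ} (f : Fin r → DiffPoly k n m) :
    diffAdjoin k (Set.range f)
      ≤ (aeval (fun p : Fin r × DOp m => applyOp p.2 (f p.1)) :
          DiffPoly k r m →ₐ[k] DiffPoly k n m).range := by
  apply sInf_le
  constructor
  · rintro _ ⟨i, rfl⟩
    exact (AlgHom.mem_range _).mpr ⟨X (i, 0), by rw [aeval_X]; exact applyOp_zero (f i)⟩
  · intro i x hx
    obtain ⟨P, rfl⟩ := (AlgHom.mem_range _).mp hx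
    clear hx
    induction P using MvPolynomial.induction_on with
    | C a =>
        rw [aeval_C, Derivation.map_algebraMap]
        exact Subalgebra.zero_mem _
    | add p q hp hq =>
        rw [map_add, map_add]
        exact Subalgebra.add_mem _ hp hq
    | mul_X p j hp =>
        rw [map_mul, aeval_X, Derivation.leibniz, smul_eq_mul, smul_eq_mul]
        refine Subalgebra.add_mem _
          (Subalgebra.mul_mem _ ((AlgHom.mem_range _).mpr ⟨p, rfl⟩) ?_)
          (Subalgebra.mul_mem _ ((AlgHom.mem_range _).mpr ⟨X j, by rw [aeval_X]⟩) hp)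
        rw [der_applyOp]
        exact (AlgHom.mem_range _).mpr ⟨X (j.1, j.2 + Finsupp.single i 1), by rw [aeval_X]⟩

end AevalLemmas

/-- If the highest homogeneous parts of `f_1,…,f_r` are differentially algebraically
independent over `k`, then for every `u` in the differential subalgebra generated by the
`f_i`, its highest homogeneous part lies in the differential subalgebra generated by the
highest homogeneous parts of the `f_i`. -/
theorem stmt1 {k : Type} [Field k] [CharZero k] {n m r : ℕ}
    (f : Fin r → DiffPoly k n m)
    (hind : Function.Injective
      (aeval (fun p : Fin r × DOp m => applyOp p.2 (dtop (f p.1))) :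
        DiffPoly k r m →ₐ[k] DiffPoly k n m))
    (u : DiffPoly k n m) (hu : u ∈ diffAdjoin k (Set.range f)) :
    dtop u ∈ diffAdjoin k (Set.range fun i => dtop (f i)) := by
  classical
  obtain ⟨P, hP⟩ := (AlgHom.mem_range _).mp (diffAdjoin_le_range f hu)
  by_cases hP0 : P = 0
  · rw [hP0, map_zero] at hP
    rw [← hP, show dtop (0 : DiffPoly k n m) = 0 from by unfold dtop; rw [map_zero]]
    exact Subalgebra.zero_mem _
  -- notation
  set gb : Fin r × DOp m → DiffPoly k n m :=
    fun p : Fin r × DOp m => applyOp p.2 (dtop (f p.1)) with hgb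
  set w' : Fin r × DOp m → ℕ :=
    fun p => ddeg (f p.1) + p.2.sum fun _ v => v with hw'
  set D : ℕ := weightedTotalDegree w' P with hD
  set Q : DiffPoly k r m := weightedHomogeneousComponent w' D P with hQ
  -- basic homogeneity facts
  have hdtopW : ∀ i : Fin r,
      dtop (f i) ∈ weightedHomogeneousSubmodule k (dwt n m) (ddeg (f i)) := by
    intro i
    unfold dtop
    exact weightedHomogeneousComponent_mem (dwt n m) (f i) (ddeg (f i))
  have hgbW : ∀ p : Fin r × DOp m,
      gb p ∈ weightedHomogeneousSubmodule k (dwt n m) (w' p) := by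
    intro p
    exact applyOp_mem_shift' (fun a => weightedHomogeneousSubmodule k (dwt n m) a)
      (fun i a x hx => der_mem_WHS hx i) p.2 (ddeg (f p.1)) (hdtopW p.1)
  have hE : ∀ p : Fin r × DOp m,
      applyOp p.2 (f p.1) - gb p ∈ degLT k n m (w' p) := by
    intro p
    rw [hgb, ← applyOp_sub]
    exact applyOp_mem_shift' (fun a => degLT k n m a)
      (fun i a x hx => der_mem_degLT hx i) p.2 (ddeg (f p.1)) sub_dtop_mem_degLT
  have hgbLE : ∀ p : Fin r × DOp m, gb p ∈ degLE k n m (w' p) :=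
    fun p => WHS_le_degLE (hgbW p)
  have hgLE : ∀ p : Fin r × DOp m, applyOp p.2 (f p.1) ∈ degLE k n m (w' p) := by
    intro p
    rw [show applyOp p.2 (f p.1) = gb p + (applyOp p.2 (f p.1) - gb p) from by ring]
    exact Submodule.add_mem _ (hgbLE p) (degLT_le_degLE (hE p))
  have hweight : ∀ α : (Fin r × DOp m) →₀ ℕ,
      Finsupp.weight w' α = ∑ p ∈ α.support, α p * w' p := by
    intro α
    rw [Finsupp.weight_apply, Finsupp.sum]
    exact Finset.sum_congr rfl (fun p _ => nsmul_eq_mul _ _)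
  -- the top component of P
  have hQcoeff : ∀ α, coeff α Q =
      if Finsupp.weight w' α = D then coeff α P else 0 := by
    intro α
    rw [hQ, coeff_weightedHomogeneousComponent]
  have hQne : Q ≠ 0 := by
    obtain ⟨α₀, hα₀, hsup⟩ := Finset.exists_mem_eq_sup P.support
      (MvPolynomial.support_nonempty.mpr hP0) (fun α => Finsupp.weight w' α)
    intro h0
    have hDα : Finsupp.weight w' α₀ = D := hsup.symm
    have hc := hQcoeff α₀
    rw [h0, if_pos hDα] at hc
    exact (MvPolynomial.mem_support_iff.mp hα₀) hc.symm
  have hGne : aeval gb Q ≠ 0 := by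
    intro h
    exact hQne (hind (by rw [h, map_zero]))
  have hGW : IsWeightedHomogeneous (dwt n m) (aeval gb Q) D := by
    refine aeval_isWH gb w' (fun p => hgbW p) ?_
    rw [hQ]
    exact weightedHomogeneousComponent_isWeightedHomogeneous D P
  -- u minus the candidate top part has lower degree
  have hgP : aeval (fun p : Fin r × DOp m => applyOp p.2 (f p.1)) P
      = ∑ α ∈ P.support, C (coeff α P) *
          α.prod fun p t => (applyOp p.2 (f p.1)) ^ t := by
    conv_lhs => rw [as_sum P]
    rw [map_sum]
    exact Finset.sum_congr rfl fun α _ => by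
      rw [aeval_monomial, MvPolynomial.algebraMap_eq]
  have hQsupp : Q.support ⊆ P.support := by
    intro α hα
    rw [MvPolynomial.mem_support_iff] at hα ⊢
    intro h0
    apply hα
    rw [hQcoeff α, h0, ite_self]
  have hgQ : aeval gb Q
      = ∑ α ∈ P.support, C (coeff α Q) * α.prod fun p t => (gb p) ^ t := by
    conv_lhs => rw [as_sum Q]
    rw [map_sum]
    rw [Finset.sum_subset hQsupp (fun α _ hα => by
      rw [MvPolynomial.notMem_support_iff.mp hα, map_zero, map_zero])]
    exact Finset.sum_congr rfl fun α _ => by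
      rw [aeval_monomial, MvPolynomial.algebraMap_eq]
  have hdiff : u - aeval gb Q ∈ degLT k n m D := by
    rw [← hP, hgP, hgQ, ← Finset.sum_sub_distrib]
    apply Submodule.sum_mem
    intro α hα
    have hWle : Finsupp.weight w' α ≤ D := le_weightedTotalDegree w' hα
    have hprodsub : (α.prod fun p t => (applyOp p.2 (f p.1)) ^ t)
        - (α.prod fun p t => (gb p) ^ t)
          ∈ degLT k n m (Finsupp.weight w' α) := by
      rw [Finsupp.prod, Finsupp.prod, hweight α]
      exact prod_sub_prod_mem_degLT α.support _ _ α (fun p => w' p)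
        (fun p _ => hgbLE p) (fun p _ => hgLE p) (fun p _ => hE p)
    have hprodLE : (α.prod fun p t => (applyOp p.2 (f p.1)) ^ t)
        ∈ degLE k n m (Finsupp.weight w' α) := by
      rw [Finsupp.prod, hweight α]
      exact prod_mem_degLE α.support _ α (fun p => w' p) (fun p _ => hgLE p)
    by_cases hWD : Finsupp.weight w' α = D
    · rw [hQcoeff α, if_pos hWD, ← mul_sub, ← smul_eq_C_mul]
      refine Submodule.smul_mem _ _ ?_
      rw [← hWD]
      exact hprodsub
    · rw [hQcoeff α, if_neg hWD, map_zero, zero_mul, sub_zero, ← smul_eq_C_mul]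
      exact Submodule.smul_mem _ _
        (degLE_le_degLT (lt_of_le_of_ne hWle hWD) hprodLE)
  -- identify the top component of u
  have hGW' : ∀ μ, coeff μ (aeval gb Q) ≠ 0 → Finsupp.weight (dwt n m) μ = D :=
    fun μ h => hGW h
  have hLT : ∀ μ, coeff μ (u - aeval gb Q) ≠ 0 → Finsupp.weight (dwt n m) μ < D :=
    fun μ h => hdiff μ h
  have hcoeff : ∀ μ, coeff μ u = coeff μ (aeval gb Q) + coeff μ (u - aeval gb Q) := by
    intro μ
    rw [MvPolynomial.coeff_sub]
    ring
  have hddeg : ddeg u = D := by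
    unfold ddeg weightedTotalDegree
    apply le_antisymm
    · apply Finset.sup_le
      intro μ hμ
      have hcu := MvPolynomial.mem_support_iff.mp hμ
      by_cases h1 : coeff μ (aeval gb Q) = 0
      · have h2 : coeff μ (u - aeval gb Q) ≠ 0 := by
          intro h2
          exact hcu (by rw [hcoeff μ, h1, h2, add_zero])
        exact le_of_lt (hLT μ h2)
      · exact le_of_eq (hGW' μ h1)
    · obtain ⟨μ₀, hμ₀⟩ := MvPolynomial.ne_zero_iff.mp hGne
      have hw0 : Finsupp.weight (dwt n m) μ₀ = D := hGW' μ₀ hμ₀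
      have h2 : coeff μ₀ (u - aeval gb Q) = 0 := by
        by_contra h2
        exact absurd hw0 (ne_of_lt (hLT μ₀ h2))
      have hcu : coeff μ₀ u ≠ 0 := by
        rw [hcoeff μ₀, h2, add_zero]
        exact hμ₀
      calc D = Finsupp.weight (dwt n m) μ₀ := hw0.symm
        _ ≤ _ := Finset.le_sup (MvPolynomial.mem_support_iff.mpr hcu)
  have hdtop : dtop u = aeval gb Q := by
    unfold dtop
    rw [hddeg]
    apply MvPolynomial.ext
    intro μ
    rw [coeff_weightedHomogeneousComponent]
    by_cases hw : Finsupp.weight (dwt n m) μ = D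
    · rw [if_pos hw, hcoeff μ]
      have h2 : coeff μ (u - aeval gb Q) = 0 := by
        by_contra h2
        exact absurd hw (ne_of_lt (hLT μ h2))
      rw [h2, add_zero]
    · rw [if_neg hw]
      by_contra hne
      exact hw (hGW' μ (fun h0 => hne h0.symm))
  rw [hdtop]
  have hsub : Set.range gb ⊆ ↑(diffAdjoin k (Set.range fun i => dtop (f i))) := by
    rintro _ ⟨p, rfl⟩
    exact applyOp_mem_diffAdjoin p.2 (subset_diffAdjoin _ ⟨p.1, rfl⟩)
  have hle := Algebra.adjoin_le hsub
  rw [Algebra.adjoin_range_eq_range_aeval] at hle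
  exact hle ((AlgHom.mem_range _).mpr ⟨Q, rfl⟩)
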